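/- Let f : ℝ → ℝ be twice continuously differentiable with f, f′ and f″ bounded, and let χ : ℝ → ℝ be infinitely differentiable with compact support. Assume there is c > 0 such that f(x) ≥ c for all x in the support of χ. Then for every β ≥ 0 and each k ∈ {0, 1, 2} there exists a constant C > 0 such that for all ε ∈ (0, 1], all t > 0 and all x ∈ ℝ: t^{β/2} · |x|^{β + k} · |(d/dx)^k ( e^{−t·f(εx)·x²} · χ(εx) )| ≤ C. -/

import Mathlib

private lemma rpow_exp_bound14 {c γ : ℝ} (hc : 0 < c) (hγ : 0 ≤ γ) (u : ℝ) (hu : 0 ≤ u) :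
    u ^ γ * Real.exp (-(c * u)) ≤ max 1 ((γ / c) ^ γ) := by
  rcases eq_or_lt_of_le hγ with h0 | h0
  · rw [← h0, Real.rpow_zero, one_mul]
    exact le_trans (Real.exp_le_one_iff.2 (by nlinarith)) (le_max_left _ _)
  · have key : u ^ γ ≤ (γ / c) ^ γ * Real.exp (c * u) := by
      have hu' : u = (γ / c) * (c * u / γ) := by field_simp
      calc u ^ γ = ((γ / c) * (c * u / γ)) ^ γ := by rw [← hu']
        _ = (γ / c) ^ γ * (c * u / γ) ^ γ :=
            Real.mul_rpow (by positivity) (by positivity)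
        _ ≤ (γ / c) ^ γ * Real.exp (c * u) := by
            have h2 : (c * u / γ) ^ γ ≤ Real.exp (c * u) := by
              calc (c * u / γ) ^ γ ≤ (Real.exp (c * u / γ)) ^ γ := by
                    apply Real.rpow_le_rpow (by positivity)
                    · linarith [Real.add_one_le_exp (c * u / γ)]
                    · exact le_of_lt h0
                _ = Real.exp (c * u / γ * γ) := by
                    rw [Real.rpow_def_of_pos (Real.exp_pos _), Real.log_exp]
                _ = Real.exp (c * u) := by congr 1; field_simp
            have h3 : (0:ℝ) ≤ (γ / c) ^ γ := by positivity
            nlinarith [Real.exp_pos (c * u)]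
    calc u ^ γ * Real.exp (-(c * u)) ≤ (γ / c) ^ γ * Real.exp (c * u) * Real.exp (-(c * u)) := by
          have := Real.exp_pos (-(c*u)); nlinarith
      _ = (γ / c) ^ γ := by rw [mul_assoc, ← Real.exp_add]; simp
      _ ≤ max 1 ((γ / c) ^ γ) := le_max_right _ _

private lemma rpow_pow_exp_bound14 {c γ : ℝ} (hc : 0 < c) (hγ : 0 ≤ γ) (j : ℕ) :
    ∃ K : ℝ, 0 < K ∧ ∀ u : ℝ, 0 ≤ u → u ^ γ * u ^ j * Real.exp (-(c * u)) ≤ K := by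
  refine ⟨max 1 (((γ + j) / c) ^ (γ + j)), lt_of_lt_of_le one_pos (le_max_left _ _), ?_⟩
  intro u hu
  rcases eq_or_lt_of_le hu with h0 | h0
  · have hu0 : u = 0 := h0.symm
    subst hu0
    have h1 : (0:ℝ) ^ γ ≤ 1 := Real.zero_rpow_le_one γ
    have h2 : (0:ℝ) ^ j ≤ 1 := zero_pow_le_one j
    have h3 : Real.exp (-(c * 0)) = 1 := by simp
    rw [h3]
    calc (0:ℝ) ^ γ * 0 ^ j * 1 ≤ 1 := by
          nlinarith [Real.rpow_nonneg (le_refl (0:ℝ)) γ, pow_nonneg (le_refl (0:ℝ)) j]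
      _ ≤ _ := le_max_left _ _
  · have h1 : u ^ γ * u ^ j = u ^ (γ + (j : ℝ)) := by
      rw [← Real.rpow_natCast u j, ← Real.rpow_add h0]
    rw [h1]
    exact rpow_exp_bound14 hc (by positivity) u hu

private lemma comp_scale14 {ε : ℝ} (g : ℝ → ℝ) (hg : Differentiable ℝ g) (y : ℝ) :
    HasDerivAt (fun z : ℝ => g (ε * z)) (deriv g (ε * y) * ε) y := by
  have h1 : HasDerivAt (fun z : ℝ => ε * z) ε y := by
    simpa using (hasDerivAt_id y).const_mul ε
  exact ((hg (ε * y)).hasDerivAt).comp y h1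

private lemma dG1_14 {f : ℝ → ℝ} {ε t : ℝ} (hfd : Differentiable ℝ f) (y : ℝ) :
    HasDerivAt (fun z => t * f (ε * z) * z ^ 2)
      (t * (deriv f (ε * y) * ε * y ^ 2 + f (ε * y) * (2 * y))) y := by
  have h2 : HasDerivAt (fun z : ℝ => z ^ 2) (2 * y) y := by
    simpa using hasDerivAt_pow 2 y
  have h := HasDerivAt.const_mul t ((comp_scale14 (ε := ε) f hfd y).fun_mul h2)
  convert h using 2 with z
  · rfl
  · rfl
  · ring

private lemma dE_14 {f : ℝ → ℝ} {ε t : ℝ} (hfd : Differentiable ℝ f) (y : ℝ) :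
    HasDerivAt (fun z => Real.exp (-(t * f (ε * z) * z ^ 2)))
      (Real.exp (-(t * f (ε * y) * y ^ 2)) *
        (-(t * (deriv f (ε * y) * ε * y ^ 2 + f (ε * y) * (2 * y))))) y :=
  ((dG1_14 (ε := ε) (t := t) hfd y).neg).exp

private lemma dPsi_14 {f χ : ℝ → ℝ} {ε t : ℝ} (hfd : Differentiable ℝ f)
    (hχd : Differentiable ℝ χ) (y : ℝ) :
    HasDerivAt (fun z => Real.exp (-(t * f (ε * z) * z ^ 2)) * χ (ε * z))
      (Real.exp (-(t * f (ε * y) * y ^ 2)) *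
          (-(t * (deriv f (ε * y) * ε * y ^ 2 + f (ε * y) * (2 * y)))) * χ (ε * y)
        + Real.exp (-(t * f (ε * y) * y ^ 2)) * (deriv χ (ε * y) * ε)) y :=
  (dE_14 (ε := ε) (t := t) hfd y).mul (comp_scale14 (ε := ε) χ hχd y)

private lemma dG1'_14 {f : ℝ → ℝ} {ε t : ℝ} (hfd : Differentiable ℝ f)
    (hFd : Differentiable ℝ (deriv f)) (y : ℝ) :
    HasDerivAt (fun z => t * (deriv f (ε * z) * ε * z ^ 2 + f (ε * z) * (2 * z)))
      (t * (deriv (deriv f) (ε * y) * ε ^ 2 * y ^ 2 + deriv f (ε * y) * ε * (4 * y)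
        + f (ε * y) * 2)) y := by
  have h2 : HasDerivAt (fun z : ℝ => z ^ 2) (2 * y) y := by
    simpa using hasDerivAt_pow 2 y
  have h3 : HasDerivAt (fun z : ℝ => 2 * z) (2:ℝ) y := by
    simpa using (hasDerivAt_id y).const_mul (2:ℝ)
  have ha := ((comp_scale14 (ε := ε) (deriv f) hFd y).mul_const ε).fun_mul h2
  have hb := (comp_scale14 (ε := ε) f hfd y).fun_mul h3
  have h := HasDerivAt.const_mul t (ha.fun_add hb)
  convert h using 2 with z
  · rfl
  · rfl
  · ring

private lemma dPsi1_14 {f χ : ℝ → ℝ} {ε t : ℝ} (hfd : Differentiable ℝ f)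
    (hFd : Differentiable ℝ (deriv f)) (hχd : Differentiable ℝ χ)
    (hχ1d : Differentiable ℝ (deriv χ)) (y : ℝ) :
    HasDerivAt (fun z =>
        Real.exp (-(t * f (ε * z) * z ^ 2)) *
            (-(t * (deriv f (ε * z) * ε * z ^ 2 + f (ε * z) * (2 * z)))) * χ (ε * z)
          + Real.exp (-(t * f (ε * z) * z ^ 2)) * (deriv χ (ε * z) * ε))
      (Real.exp (-(t * f (ε * y) * y ^ 2)) *
          (((t * (deriv f (ε * y) * ε * y ^ 2 + f (ε * y) * (2 * y))) ^ 2
            - t * (deriv (deriv f) (ε * y) * ε ^ 2 * y ^ 2 + deriv f (ε * y) * ε * (4 * y)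
                + f (ε * y) * 2)) * χ (ε * y)
          + (-(t * (deriv f (ε * y) * ε * y ^ 2 + f (ε * y) * (2 * y)))) *
              (deriv χ (ε * y) * ε) * 2
          + deriv (deriv χ) (ε * y) * ε ^ 2)) y := by
  have hA := ((dE_14 (ε := ε) (t := t) hfd y).fun_mul ((dG1'_14 (ε := ε) (t := t) hfd hFd y).fun_neg)).fun_mul
    (comp_scale14 (ε := ε) χ hχd y)
  have hB := (dE_14 (ε := ε) (t := t) hfd y).fun_mul
    ((comp_scale14 (ε := ε) (deriv χ) hχ1d y).mul_const ε)
  have h := hA.fun_add hB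
  convert h using 1
  · rfl
  · rfl
  ring

set_option maxHeartbeats 2000000 in
/-- Uniform Fourier-multiplier bounds for the discrete heat semigroup symbol
`ψ_ε(x) = e^{-t f(εx) x²} χ(εx)`: for `β ≥ 0` and `k ∈ {0,1,2}`,
`t^{β/2} |x|^{β+k} |ψ_ε^{(k)}(x)| ≤ C` uniformly in `ε ∈ (0,1]`, `t > 0`, `x ∈ ℝ`. -/
theorem stmt14 (f χ : ℝ → ℝ) (c : ℝ) (hc : 0 < c)
    (hf : ContDiff ℝ 2 f)
    (hfb : ∃ M : ℝ, ∀ x : ℝ, |f x| ≤ M ∧ |deriv f x| ≤ M ∧ |deriv (deriv f) x| ≤ M)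
    (hχ : ContDiff ℝ (⊤ : ℕ∞) χ) (hχs : HasCompactSupport χ)
    (hfc : ∀ x ∈ Function.support χ, c ≤ f x)
    (β : ℝ) (hβ : 0 ≤ β) (k : ℕ) (hk : k ≤ 2) :
    ∃ C : ℝ, 0 < C ∧ ∀ ε ∈ Set.Ioc (0:ℝ) 1, ∀ t : ℝ, 0 < t → ∀ x : ℝ,
      t ^ (β / 2) * |x| ^ (β + (k : ℝ)) *
          |iteratedDeriv k (fun y => Real.exp (-(t * f (ε * y) * y ^ 2)) * χ (ε * y)) x|
        ≤ C := by
  -- differentiability facts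
  have hfd : Differentiable ℝ f := hf.differentiable (by norm_num)
  have hFd : Differentiable ℝ (deriv f) := by
    have h2 : ContDiff ℝ ((1 : WithTop ℕ∞) + 1) f := by convert hf using 2; norm_num
    exact (contDiff_succ_iff_deriv.mp h2).2.2.differentiable (by norm_num)
  have hχinf : ContDiff ℝ (⊤ : ℕ∞) χ := hχ
  rw [contDiff_infty_iff_deriv] at hχinf
  have hχinf2 := hχinf.2
  rw [contDiff_infty_iff_deriv] at hχinf2
  have hχd : Differentiable ℝ χ := hχinf.1
  have hχ1d : Differentiable ℝ (deriv χ) := hχinf2.1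
  -- bounds
  obtain ⟨M, hM⟩ := hfb
  obtain ⟨B0, hB0⟩ := hχs.exists_bound_of_continuous hχd.continuous
  obtain ⟨B1, hB1⟩ := hχs.deriv.exists_bound_of_continuous hχ1d.continuous
  obtain ⟨B2, hB2⟩ := hχs.deriv.deriv.exists_bound_of_continuous hχinf2.2.continuous
  obtain ⟨R, hR⟩ := hχs.isBounded.subset_closedBall 0
  obtain ⟨N, hN1, hNM, hNR, hNB0, hNB1, hNB2⟩ :
      ∃ N : ℝ, 1 ≤ N ∧ M ≤ N ∧ R ≤ N ∧ B0 ≤ N ∧ B1 ≤ N ∧ B2 ≤ N := by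
    refine ⟨max 1 (max M (max R (max B0 (max B1 B2)))), le_max_left _ _, ?_, ?_, ?_, ?_, ?_⟩ <;>
      simp [le_max_iff, le_refl]
  have hN0 : (0:ℝ) < N := lt_of_lt_of_le one_pos hN1
  have hχb : ∀ z : ℝ, |χ z| ≤ N := fun z => le_trans (by simpa using hB0 z) hNB0
  have hχ1b : ∀ z : ℝ, |deriv χ z| ≤ N := fun z => le_trans (by simpa using hB1 z) hNB1
  have hχ2b : ∀ z : ℝ, |deriv (deriv χ) z| ≤ N := fun z => le_trans (by simpa using hB2 z) hNB2
  have hfB : ∀ z : ℝ, |f z| ≤ N := fun z => le_trans (hM z).1 hNM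
  have hf1B : ∀ z : ℝ, |deriv f z| ≤ N := fun z => le_trans (hM z).2.1 hNM
  have hf2B : ∀ z : ℝ, |deriv (deriv f) z| ≤ N := fun z => le_trans (hM z).2.2 hNM
  have hRs : ∀ z ∈ tsupport χ, |z| ≤ N := fun z hz =>
    le_trans (by simpa [Real.dist_eq] using hR hz) hNR
  have hfc' : ∀ z ∈ tsupport χ, c ≤ f z := fun z hz =>
    closure_minimal hfc (isClosed_le continuous_const hf.continuous) hz
  have hvan : ∀ z : ℝ, z ∉ tsupport χ → χ z = 0 ∧ deriv χ z = 0 ∧ deriv (deriv χ) z = 0 := by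
    intro z hz
    refine ⟨image_eq_zero_of_notMem_tsupport hz, ?_, ?_⟩
    · by_contra h
      exact hz (support_deriv_subset (Function.mem_support.2 h))
    · by_contra h
      have h1 : z ∈ tsupport (deriv χ) := support_deriv_subset (Function.mem_support.2 h)
      have h2 : tsupport (deriv χ) ⊆ tsupport χ :=
        closure_minimal support_deriv_subset (isClosed_tsupport χ)
      exact hz (h2 h1)
  have hNpow : ∀ m n : ℕ, m ≤ n → N ^ m ≤ N ^ n := fun m n h => pow_le_pow_right₀ hN1 h
  obtain ⟨K0, hK0, hK0'⟩ := rpow_pow_exp_bound14 hc (by positivity : (0:ℝ) ≤ β / 2) 0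
  obtain ⟨K1, hK1, hK1'⟩ := rpow_pow_exp_bound14 hc (by positivity : (0:ℝ) ≤ β / 2) 1
  obtain ⟨K2, hK2, hK2'⟩ := rpow_pow_exp_bound14 hc (by positivity : (0:ℝ) ≤ β / 2) 2
  refine ⟨20 * N ^ 6 * (K0 + K1 + K2) + N, by positivity, ?_⟩
  intro ε hε t ht x
  obtain ⟨hε0, hε1⟩ := hε
  have ha0 : 0 ≤ |x| := abs_nonneg x
  have hx2 : x ^ 2 = |x| ^ 2 := (sq_abs x).symm
  have hu0 : 0 ≤ t * |x| ^ 2 := by positivity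
  have hCbig : 0 < 20 * N ^ 6 * (K0 + K1 + K2) + N := by positivity
  -- case x = 0
  rcases eq_or_ne x 0 with rfl | hx0
  · rcases eq_or_ne (β + (k:ℝ)) 0 with hb0 | hb0
    · have hk' : (0:ℝ) ≤ (k:ℝ) := Nat.cast_nonneg k
      have hβ0 : β = 0 := by linarith
      have hk0 : k = 0 := by
        have : (k:ℝ) = 0 := by linarith
        exact_mod_cast this
      subst hk0
      rw [hβ0]
      simp only [iteratedDeriv_zero]
      have h3 : |Real.exp (-(t * f (ε * 0) * 0 ^ 2)) * χ (ε * 0)| = |χ 0| := by norm_num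
      rw [h3]
      have h1 : (t:ℝ) ^ ((0:ℝ) / 2) = 1 := by norm_num
      have h2 : |(0:ℝ)| ^ ((0:ℝ) + ((0:ℕ):ℝ)) = 1 := by norm_num
      rw [h1, h2]
      have h4 := hχb 0
      nlinarith [mul_pos (mul_pos (by norm_num : (0:ℝ) < 20) (pow_pos hN0 6))
        (by positivity : (0:ℝ) < K0 + K1 + K2)]
    · have h0 : |(0:ℝ)| ^ (β + (k:ℝ)) = 0 := by
        rw [abs_zero]; exact Real.zero_rpow hb0
      rw [h0]
      simpa using le_of_lt hCbig
  -- x ≠ 0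
  have ha : 0 < |x| := abs_pos.2 hx0
  have hW : t ^ (β / 2) * |x| ^ (β + (k:ℝ)) = (t * |x| ^ 2) ^ (β / 2) * |x| ^ k := by
    rw [Real.rpow_add ha, Real.rpow_natCast]
    have h1 : |x| ^ β = (|x| ^ 2) ^ (β / 2) := by
      rw [← Real.rpow_natCast |x| 2, ← Real.rpow_mul ha0]
      congr 1
      push_cast
      ring
    rw [h1, ← mul_assoc, ← Real.mul_rpow (le_of_lt ht) (by positivity)]
  by_cases hmem : ε * x ∈ tsupport χ
  swap
  · -- outside the support : all terms vanish
    obtain ⟨hz0, hz1, hz2⟩ := hvan _ hmem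
    interval_cases k
    · simp only [iteratedDeriv_zero, hz0, mul_zero, abs_zero]
      simpa using le_of_lt hCbig
    · rw [iteratedDeriv_one,
        (dPsi_14 (ε := ε) (t := t) hfd hχd x).deriv, hz0, hz1]
      simp only [mul_zero, zero_mul, add_zero, abs_zero]
      simpa using le_of_lt hCbig
    · have hfun : deriv (fun y => Real.exp (-(t * f (ε * y) * y ^ 2)) * χ (ε * y)) =
          (fun y => Real.exp (-(t * f (ε * y) * y ^ 2)) *
              (-(t * (deriv f (ε * y) * ε * y ^ 2 + f (ε * y) * (2 * y)))) * χ (ε * y)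
            + Real.exp (-(t * f (ε * y) * y ^ 2)) * (deriv χ (ε * y) * ε)) :=
        funext fun y => (dPsi_14 (ε := ε) (t := t) hfd hχd y).deriv
      rw [show (2:ℕ) = 1 + 1 from rfl, iteratedDeriv_succ, iteratedDeriv_one, hfun,
        (dPsi1_14 (ε := ε) (t := t) hfd hFd hχd hχ1d x).deriv, hz0, hz1, hz2]
      simp only [mul_zero, zero_mul, add_zero, zero_add, abs_zero]
      simpa using le_of_lt hCbig
  -- inside the support
  have hea : ε * |x| ≤ N := by
    have h := hRs _ hmem
    rwa [abs_mul, abs_of_pos hε0] at h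
  have hea0 : 0 ≤ ε * |x| := by positivity
  have hcf : c ≤ f (ε * x) := hfc' _ hmem
  have hEe : Real.exp (-(t * f (ε * x) * x ^ 2)) ≤ Real.exp (-(c * (t * |x| ^ 2))) := by
    apply Real.exp_le_exp.2
    rw [hx2]
    nlinarith [sq_nonneg |x|]
  have he0 : (0:ℝ) < Real.exp (-(c * (t * |x| ^ 2))) := Real.exp_pos _
  have hS0 : (0:ℝ) ≤ (t * |x| ^ 2) ^ (β / 2) := Real.rpow_nonneg hu0 _
  have ht0 : (0:ℝ) ≤ t := le_of_lt ht
  -- bound on G1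
  have hG1 : |t * (deriv f (ε * x) * ε * x ^ 2 + f (ε * x) * (2 * x))| ≤ 3 * N ^ 2 * t * |x| := by
    rw [abs_mul, abs_of_pos ht]
    have h1 : |deriv f (ε * x) * ε * x ^ 2 + f (ε * x) * (2 * x)| ≤
        |deriv f (ε * x)| * ε * |x| ^ 2 + |f (ε * x)| * (2 * |x|) := by
      calc |deriv f (ε * x) * ε * x ^ 2 + f (ε * x) * (2 * x)|
          ≤ |deriv f (ε * x) * ε * x ^ 2| + |f (ε * x) * (2 * x)| := abs_add_le _ _
        _ = |deriv f (ε * x)| * ε * |x| ^ 2 + |f (ε * x)| * (2 * |x|) := by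
            rw [abs_mul, abs_mul, abs_mul, abs_mul, abs_pow, abs_of_pos hε0,
              abs_of_nonneg (by norm_num : (0:ℝ) ≤ 2)]
    have h2 := hf1B (ε * x)
    have h3 := hfB (ε * x)
    have h4 : 0 ≤ |deriv f (ε * x)| := abs_nonneg _
    have h5 : 0 ≤ |f (ε * x)| := abs_nonneg _
    have h6 : |deriv f (ε * x)| * (ε * |x|) ≤ N * N :=
      mul_le_mul h2 hea hea0 (le_of_lt hN0)
    have hA : |deriv f (ε * x)| * ε * |x| ^ 2 ≤ N ^ 2 * |x| := by
      nlinarith [mul_le_mul_of_nonneg_right h6 ha0]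
    have hB : |f (ε * x)| * (2 * |x|) ≤ 2 * N * |x| := by
      nlinarith [mul_le_mul_of_nonneg_right h3 ha0]
    calc t * |deriv f (ε * x) * ε * x ^ 2 + f (ε * x) * (2 * x)|
        ≤ t * (N ^ 2 * |x| + 2 * N * |x|) := by
          apply mul_le_mul_of_nonneg_left _ ht0
          linarith
      _ ≤ 3 * N ^ 2 * t * |x| := by
          nlinarith [mul_le_mul_of_nonneg_right
            (by nlinarith [hN1, hN0] : (2:ℝ) * N ≤ 2 * N ^ 2) (mul_nonneg ht0 ha0)]
  -- bound on G2
  have hG2 : |t * (deriv (deriv f) (ε * x) * ε ^ 2 * x ^ 2 + deriv f (ε * x) * ε * (4 * x)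
      + f (ε * x) * 2)| ≤ 7 * N ^ 3 * t := by
    rw [abs_mul, abs_of_pos ht]
    have e1 : |deriv (deriv f) (ε * x) * ε ^ 2 * x ^ 2| =
        |deriv (deriv f) (ε * x)| * (ε * |x|) ^ 2 := by
      rw [abs_mul, abs_mul, abs_pow, abs_pow, abs_of_pos hε0]; ring
    have e2 : |deriv f (ε * x) * ε * (4 * x)| = |deriv f (ε * x)| * (ε * |x|) * 4 := by
      rw [abs_mul, abs_mul, abs_mul, abs_of_pos hε0,
        abs_of_nonneg (by norm_num : (0:ℝ) ≤ 4)]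
      ring
    have e3 : |f (ε * x) * 2| = |f (ε * x)| * 2 := by
      rw [abs_mul, abs_of_nonneg (by norm_num : (0:ℝ) ≤ 2)]
    have h1 : |deriv (deriv f) (ε * x) * ε ^ 2 * x ^ 2 + deriv f (ε * x) * ε * (4 * x)
        + f (ε * x) * 2| ≤ |deriv (deriv f) (ε * x)| * (ε * |x|) ^ 2
          + |deriv f (ε * x)| * (ε * |x|) * 4 + |f (ε * x)| * 2 := by
      calc |deriv (deriv f) (ε * x) * ε ^ 2 * x ^ 2 + deriv f (ε * x) * ε * (4 * x)
          + f (ε * x) * 2|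
          ≤ |deriv (deriv f) (ε * x) * ε ^ 2 * x ^ 2 + deriv f (ε * x) * ε * (4 * x)|
            + |f (ε * x) * 2| := abs_add_le _ _
        _ ≤ |deriv (deriv f) (ε * x) * ε ^ 2 * x ^ 2| + |deriv f (ε * x) * ε * (4 * x)|
            + |f (ε * x) * 2| := by
            linarith [abs_add_le (deriv (deriv f) (ε * x) * ε ^ 2 * x ^ 2)
              (deriv f (ε * x) * ε * (4 * x))]
        _ = _ := by rw [e1, e2, e3]
    have h2 := hf2B (ε * x)
    have h3 := hf1B (ε * x)
    have h4 := hfB (ε * x)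
    have hA2 : |deriv (deriv f) (ε * x)| * (ε * |x|) ^ 2 ≤ N * N ^ 2 :=
      mul_le_mul h2 (pow_le_pow_left₀ hea0 hea 2) (by positivity) (le_of_lt hN0)
    have hB2 : |deriv f (ε * x)| * (ε * |x|) ≤ N * N :=
      mul_le_mul h3 hea hea0 (le_of_lt hN0)
    have hsum : |deriv (deriv f) (ε * x)| * (ε * |x|) ^ 2
        + |deriv f (ε * x)| * (ε * |x|) * 4 + |f (ε * x)| * 2 ≤ 7 * N ^ 3 := by
      have hq1 : N ^ 2 ≤ N ^ 3 := hNpow 2 3 (by norm_num)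
      have hq2 : N ≤ N ^ 3 := by
        have := hNpow 1 3 (by norm_num); simpa using this
      nlinarith
    calc t * |deriv (deriv f) (ε * x) * ε ^ 2 * x ^ 2 + deriv f (ε * x) * ε * (4 * x)
        + f (ε * x) * 2| ≤ t * (7 * N ^ 3) := by
          apply mul_le_mul_of_nonneg_left _ ht0
          linarith
      _ = 7 * N ^ 3 * t := by ring
  have hk0u := hK0' (t * |x| ^ 2) hu0
  have hk1u := hK1' (t * |x| ^ 2) hu0
  have hk2u := hK2' (t * |x| ^ 2) hu0
  have hterm0nn : (0:ℝ) ≤ (t * |x| ^ 2) ^ (β / 2) * (t * |x| ^ 2) ^ 0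
      * Real.exp (-(c * (t * |x| ^ 2))) := by positivity
  have hterm1nn : (0:ℝ) ≤ (t * |x| ^ 2) ^ (β / 2) * (t * |x| ^ 2) ^ 1
      * Real.exp (-(c * (t * |x| ^ 2))) := by positivity
  have hterm2nn : (0:ℝ) ≤ (t * |x| ^ 2) ^ (β / 2) * (t * |x| ^ 2) ^ 2
      * Real.exp (-(c * (t * |x| ^ 2))) := by positivity
  rw [hW]
  interval_cases k
  · -- k = 0
    simp only [iteratedDeriv_zero, pow_zero, mul_one]
    have hterm : |Real.exp (-(t * f (ε * x) * x ^ 2)) * χ (ε * x)| ≤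
        Real.exp (-(c * (t * |x| ^ 2))) * N := by
      rw [abs_mul, abs_of_pos (Real.exp_pos _)]
      exact mul_le_mul hEe (hχb _) (abs_nonneg _) (le_of_lt he0)
    calc (t * |x| ^ 2) ^ (β / 2) * |Real.exp (-(t * f (ε * x) * x ^ 2)) * χ (ε * x)|
        ≤ (t * |x| ^ 2) ^ (β / 2) * (Real.exp (-(c * (t * |x| ^ 2))) * N) :=
          mul_le_mul_of_nonneg_left hterm hS0
      _ = N * ((t * |x| ^ 2) ^ (β / 2) * (t * |x| ^ 2) ^ 0
          * Real.exp (-(c * (t * |x| ^ 2)))) := by ring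
      _ ≤ N * K0 := mul_le_mul_of_nonneg_left hk0u (le_of_lt hN0)
      _ ≤ 20 * N ^ 6 * (K0 + K1 + K2) + N := by
          have h6 : N ≤ N ^ 6 := by
            have := hNpow 1 6 (by norm_num); simpa using this
          nlinarith [hK0, hK1, hK2, hN0]
  · -- k = 1
    rw [iteratedDeriv_one, (dPsi_14 (ε := ε) (t := t) hfd hχd x).deriv]
    have hterm : |Real.exp (-(t * f (ε * x) * x ^ 2)) *
        (-(t * (deriv f (ε * x) * ε * x ^ 2 + f (ε * x) * (2 * x)))) * χ (ε * x)
        + Real.exp (-(t * f (ε * x) * x ^ 2)) * (deriv χ (ε * x) * ε)| ≤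
        Real.exp (-(c * (t * |x| ^ 2))) * (3 * N ^ 2 * t * |x| * N + N * ε) := by
      have hA : |Real.exp (-(t * f (ε * x) * x ^ 2)) *
          (-(t * (deriv f (ε * x) * ε * x ^ 2 + f (ε * x) * (2 * x)))) * χ (ε * x)| ≤
          Real.exp (-(c * (t * |x| ^ 2))) * (3 * N ^ 2 * t * |x| * N) := by
        rw [abs_mul, abs_mul, abs_neg, abs_of_pos (Real.exp_pos _)]
        calc Real.exp (-(t * f (ε * x) * x ^ 2)) *
            |t * (deriv f (ε * x) * ε * x ^ 2 + f (ε * x) * (2 * x))| * |χ (ε * x)|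
            ≤ Real.exp (-(c * (t * |x| ^ 2))) * (3 * N ^ 2 * t * |x|) * N := by
              apply mul_le_mul _ (hχb _) (abs_nonneg _) (by positivity)
              exact mul_le_mul hEe hG1 (abs_nonneg _) (le_of_lt he0)
          _ = Real.exp (-(c * (t * |x| ^ 2))) * (3 * N ^ 2 * t * |x| * N) := by ring
      have hB : |Real.exp (-(t * f (ε * x) * x ^ 2)) * (deriv χ (ε * x) * ε)| ≤
          Real.exp (-(c * (t * |x| ^ 2))) * (N * ε) := by
        rw [abs_mul, abs_mul, abs_of_pos (Real.exp_pos _), abs_of_pos hε0]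
        exact mul_le_mul hEe (mul_le_mul_of_nonneg_right (hχ1b _) (le_of_lt hε0))
          (by positivity) (le_of_lt he0)
      calc |Real.exp (-(t * f (ε * x) * x ^ 2)) *
          (-(t * (deriv f (ε * x) * ε * x ^ 2 + f (ε * x) * (2 * x)))) * χ (ε * x)
          + Real.exp (-(t * f (ε * x) * x ^ 2)) * (deriv χ (ε * x) * ε)| ≤ _ + _ := abs_add_le _ _
        _ ≤ Real.exp (-(c * (t * |x| ^ 2))) * (3 * N ^ 2 * t * |x| * N)
            + Real.exp (-(c * (t * |x| ^ 2))) * (N * ε) := add_le_add hA hB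
        _ = Real.exp (-(c * (t * |x| ^ 2))) * (3 * N ^ 2 * t * |x| * N + N * ε) := by ring
    calc (t * |x| ^ 2) ^ (β / 2) * |x| ^ 1 * |Real.exp (-(t * f (ε * x) * x ^ 2)) *
        (-(t * (deriv f (ε * x) * ε * x ^ 2 + f (ε * x) * (2 * x)))) * χ (ε * x)
        + Real.exp (-(t * f (ε * x) * x ^ 2)) * (deriv χ (ε * x) * ε)|
        ≤ (t * |x| ^ 2) ^ (β / 2) * |x| ^ 1 *
          (Real.exp (-(c * (t * |x| ^ 2))) * (3 * N ^ 2 * t * |x| * N + N * ε)) := by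
          apply mul_le_mul_of_nonneg_left hterm (by positivity)
      _ = 3 * N ^ 3 * ((t * |x| ^ 2) ^ (β / 2) * (t * |x| ^ 2) ^ 1
            * Real.exp (-(c * (t * |x| ^ 2))))
          + N * (ε * |x|) * ((t * |x| ^ 2) ^ (β / 2) * (t * |x| ^ 2) ^ 0
            * Real.exp (-(c * (t * |x| ^ 2)))) := by ring
      _ ≤ 3 * N ^ 3 * K1 + N * N * K0 := by
          have s1 : 3 * N ^ 3 * ((t * |x| ^ 2) ^ (β / 2) * (t * |x| ^ 2) ^ 1
              * Real.exp (-(c * (t * |x| ^ 2)))) ≤ 3 * N ^ 3 * K1 :=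
            mul_le_mul_of_nonneg_left hk1u (by positivity)
          have s2 : N * (ε * |x|) * ((t * |x| ^ 2) ^ (β / 2) * (t * |x| ^ 2) ^ 0
              * Real.exp (-(c * (t * |x| ^ 2)))) ≤ N * N * K0 :=
            mul_le_mul (mul_le_mul_of_nonneg_left hea (le_of_lt hN0)) hk0u
              hterm0nn (by positivity)
          linarith
      _ ≤ 20 * N ^ 6 * (K0 + K1 + K2) + N := by
          have h36 : N ^ 3 ≤ N ^ 6 := hNpow 3 6 (by norm_num)
          have h26 : N ^ 2 ≤ N ^ 6 := hNpow 2 6 (by norm_num)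
          nlinarith [hK0, hK1, hK2, hN0, mul_le_mul_of_nonneg_right h36 (le_of_lt hK1),
            mul_le_mul_of_nonneg_right h26 (le_of_lt hK0)]
  · -- k = 2
    have hfun : deriv (fun y => Real.exp (-(t * f (ε * y) * y ^ 2)) * χ (ε * y)) =
        (fun y => Real.exp (-(t * f (ε * y) * y ^ 2)) *
            (-(t * (deriv f (ε * y) * ε * y ^ 2 + f (ε * y) * (2 * y)))) * χ (ε * y)
          + Real.exp (-(t * f (ε * y) * y ^ 2)) * (deriv χ (ε * y) * ε)) :=
      funext fun y => (dPsi_14 (ε := ε) (t := t) hfd hχd y).deriv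
    rw [show (2:ℕ) = 1 + 1 from rfl, iteratedDeriv_succ, iteratedDeriv_one, hfun,
      (dPsi1_14 (ε := ε) (t := t) hfd hFd hχd hχ1d x).deriv]
    have hT1 : |(t * (deriv f (ε * x) * ε * x ^ 2 + f (ε * x) * (2 * x))) ^ 2
        - t * (deriv (deriv f) (ε * x) * ε ^ 2 * x ^ 2 + deriv f (ε * x) * ε * (4 * x)
          + f (ε * x) * 2)| ≤ 9 * N ^ 4 * t ^ 2 * |x| ^ 2 + 7 * N ^ 3 * t := by
      have h1 : |(t * (deriv f (ε * x) * ε * x ^ 2 + f (ε * x) * (2 * x))) ^ 2|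
          ≤ 9 * N ^ 4 * t ^ 2 * |x| ^ 2 := by
        rw [abs_pow]
        calc |t * (deriv f (ε * x) * ε * x ^ 2 + f (ε * x) * (2 * x))| ^ 2
            ≤ (3 * N ^ 2 * t * |x|) ^ 2 := pow_le_pow_left₀ (abs_nonneg _) hG1 2
          _ = 9 * N ^ 4 * t ^ 2 * |x| ^ 2 := by ring
      calc |(t * (deriv f (ε * x) * ε * x ^ 2 + f (ε * x) * (2 * x))) ^ 2
          - t * (deriv (deriv f) (ε * x) * ε ^ 2 * x ^ 2 + deriv f (ε * x) * ε * (4 * x)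
            + f (ε * x) * 2)|
          ≤ |(t * (deriv f (ε * x) * ε * x ^ 2 + f (ε * x) * (2 * x))) ^ 2|
            + |t * (deriv (deriv f) (ε * x) * ε ^ 2 * x ^ 2 + deriv f (ε * x) * ε * (4 * x)
              + f (ε * x) * 2)| := abs_sub _ _
        _ ≤ 9 * N ^ 4 * t ^ 2 * |x| ^ 2 + 7 * N ^ 3 * t := add_le_add h1 hG2
    have hterm : |Real.exp (-(t * f (ε * x) * x ^ 2)) *
        (((t * (deriv f (ε * x) * ε * x ^ 2 + f (ε * x) * (2 * x))) ^ 2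
          - t * (deriv (deriv f) (ε * x) * ε ^ 2 * x ^ 2 + deriv f (ε * x) * ε * (4 * x)
              + f (ε * x) * 2)) * χ (ε * x)
        + (-(t * (deriv f (ε * x) * ε * x ^ 2 + f (ε * x) * (2 * x)))) *
            (deriv χ (ε * x) * ε) * 2
        + deriv (deriv χ) (ε * x) * ε ^ 2)| ≤
        Real.exp (-(c * (t * |x| ^ 2))) *
          ((9 * N ^ 4 * t ^ 2 * |x| ^ 2 + 7 * N ^ 3 * t) * N
            + 3 * N ^ 2 * t * |x| * N * ε * 2 + N * ε ^ 2) := by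
      rw [abs_mul, abs_of_pos (Real.exp_pos _)]
      apply mul_le_mul hEe _ (abs_nonneg _) (le_of_lt he0)
      have i1 : |((t * (deriv f (ε * x) * ε * x ^ 2 + f (ε * x) * (2 * x))) ^ 2
          - t * (deriv (deriv f) (ε * x) * ε ^ 2 * x ^ 2 + deriv f (ε * x) * ε * (4 * x)
            + f (ε * x) * 2)) * χ (ε * x)| ≤
          (9 * N ^ 4 * t ^ 2 * |x| ^ 2 + 7 * N ^ 3 * t) * N := by
        rw [abs_mul]
        apply mul_le_mul hT1 (hχb _) (abs_nonneg _) (by positivity)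
      have i2 : |(-(t * (deriv f (ε * x) * ε * x ^ 2 + f (ε * x) * (2 * x)))) *
          (deriv χ (ε * x) * ε) * 2| ≤ 3 * N ^ 2 * t * |x| * N * ε * 2 := by
        rw [abs_mul, abs_mul, abs_mul, abs_neg, abs_of_pos hε0,
          abs_of_nonneg (by norm_num : (0:ℝ) ≤ 2)]
        have h2e : |deriv χ (ε * x)| * ε ≤ N * ε :=
          mul_le_mul_of_nonneg_right (hχ1b _) (le_of_lt hε0)
        have hthis : |t * (deriv f (ε * x) * ε * x ^ 2 + f (ε * x) * (2 * x))| *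
            (|deriv χ (ε * x)| * ε) ≤ 3 * N ^ 2 * t * |x| * (N * ε) :=
          mul_le_mul hG1 h2e (mul_nonneg (abs_nonneg _) (le_of_lt hε0))
            (mul_nonneg (mul_nonneg (by positivity) ht0) ha0)
        nlinarith [hthis]
      have i3 : |deriv (deriv χ) (ε * x) * ε ^ 2| ≤ N * ε ^ 2 := by
        rw [abs_mul, abs_pow, abs_of_pos hε0]
        exact mul_le_mul_of_nonneg_right (hχ2b _) (by positivity)
      calc |((t * (deriv f (ε * x) * ε * x ^ 2 + f (ε * x) * (2 * x))) ^ 2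
          - t * (deriv (deriv f) (ε * x) * ε ^ 2 * x ^ 2 + deriv f (ε * x) * ε * (4 * x)
              + f (ε * x) * 2)) * χ (ε * x)
          + (-(t * (deriv f (ε * x) * ε * x ^ 2 + f (ε * x) * (2 * x)))) *
              (deriv χ (ε * x) * ε) * 2
          + deriv (deriv χ) (ε * x) * ε ^ 2|
          ≤ |((t * (deriv f (ε * x) * ε * x ^ 2 + f (ε * x) * (2 * x))) ^ 2
            - t * (deriv (deriv f) (ε * x) * ε ^ 2 * x ^ 2 + deriv f (ε * x) * ε * (4 * x)
                + f (ε * x) * 2)) * χ (ε * x)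
            + (-(t * (deriv f (ε * x) * ε * x ^ 2 + f (ε * x) * (2 * x)))) *
                (deriv χ (ε * x) * ε) * 2|
            + |deriv (deriv χ) (ε * x) * ε ^ 2| := abs_add_le _ _
        _ ≤ |((t * (deriv f (ε * x) * ε * x ^ 2 + f (ε * x) * (2 * x))) ^ 2
            - t * (deriv (deriv f) (ε * x) * ε ^ 2 * x ^ 2 + deriv f (ε * x) * ε * (4 * x)
                + f (ε * x) * 2)) * χ (ε * x)|
            + |(-(t * (deriv f (ε * x) * ε * x ^ 2 + f (ε * x) * (2 * x)))) *
                (deriv χ (ε * x) * ε) * 2|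
            + |deriv (deriv χ) (ε * x) * ε ^ 2| := by
            linarith [abs_add_le (((t * (deriv f (ε * x) * ε * x ^ 2 + f (ε * x) * (2 * x))) ^ 2
              - t * (deriv (deriv f) (ε * x) * ε ^ 2 * x ^ 2 + deriv f (ε * x) * ε * (4 * x)
                  + f (ε * x) * 2)) * χ (ε * x))
              ((-(t * (deriv f (ε * x) * ε * x ^ 2 + f (ε * x) * (2 * x)))) *
                (deriv χ (ε * x) * ε) * 2)]
        _ ≤ _ := by linarith
    calc (t * |x| ^ 2) ^ (β / 2) * |x| ^ 2 * |Real.exp (-(t * f (ε * x) * x ^ 2)) *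
        (((t * (deriv f (ε * x) * ε * x ^ 2 + f (ε * x) * (2 * x))) ^ 2
          - t * (deriv (deriv f) (ε * x) * ε ^ 2 * x ^ 2 + deriv f (ε * x) * ε * (4 * x)
              + f (ε * x) * 2)) * χ (ε * x)
        + (-(t * (deriv f (ε * x) * ε * x ^ 2 + f (ε * x) * (2 * x)))) *
            (deriv χ (ε * x) * ε) * 2
        + deriv (deriv χ) (ε * x) * ε ^ 2)|
        ≤ (t * |x| ^ 2) ^ (β / 2) * |x| ^ 2 *
          (Real.exp (-(c * (t * |x| ^ 2))) *
            ((9 * N ^ 4 * t ^ 2 * |x| ^ 2 + 7 * N ^ 3 * t) * N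
              + 3 * N ^ 2 * t * |x| * N * ε * 2 + N * ε ^ 2)) :=
          mul_le_mul_of_nonneg_left hterm (by positivity)
      _ = 9 * N ^ 5 * ((t * |x| ^ 2) ^ (β / 2) * (t * |x| ^ 2) ^ 2
            * Real.exp (-(c * (t * |x| ^ 2))))
          + 7 * N ^ 4 * ((t * |x| ^ 2) ^ (β / 2) * (t * |x| ^ 2) ^ 1
            * Real.exp (-(c * (t * |x| ^ 2))))
          + 6 * N ^ 3 * (ε * |x|) * ((t * |x| ^ 2) ^ (β / 2) * (t * |x| ^ 2) ^ 1
            * Real.exp (-(c * (t * |x| ^ 2))))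
          + N * (ε * |x|) ^ 2 * ((t * |x| ^ 2) ^ (β / 2) * (t * |x| ^ 2) ^ 0
            * Real.exp (-(c * (t * |x| ^ 2)))) := by ring
      _ ≤ 9 * N ^ 5 * K2 + 7 * N ^ 4 * K1 + 6 * N ^ 3 * N * K1 + N * N ^ 2 * K0 := by
          have s1 : 9 * N ^ 5 * ((t * |x| ^ 2) ^ (β / 2) * (t * |x| ^ 2) ^ 2
              * Real.exp (-(c * (t * |x| ^ 2)))) ≤ 9 * N ^ 5 * K2 :=
            mul_le_mul_of_nonneg_left hk2u (by positivity)
          have s2 : 7 * N ^ 4 * ((t * |x| ^ 2) ^ (β / 2) * (t * |x| ^ 2) ^ 1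
              * Real.exp (-(c * (t * |x| ^ 2)))) ≤ 7 * N ^ 4 * K1 :=
            mul_le_mul_of_nonneg_left hk1u (by positivity)
          have s3 : 6 * N ^ 3 * (ε * |x|) * ((t * |x| ^ 2) ^ (β / 2) * (t * |x| ^ 2) ^ 1
              * Real.exp (-(c * (t * |x| ^ 2)))) ≤ 6 * N ^ 3 * N * K1 :=
            mul_le_mul (mul_le_mul_of_nonneg_left hea (by positivity)) hk1u
              hterm1nn (by positivity)
          have s4 : N * (ε * |x|) ^ 2 * ((t * |x| ^ 2) ^ (β / 2) * (t * |x| ^ 2) ^ 0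
              * Real.exp (-(c * (t * |x| ^ 2)))) ≤ N * N ^ 2 * K0 :=
            mul_le_mul (mul_le_mul_of_nonneg_left
              (pow_le_pow_left₀ hea0 hea 2) (le_of_lt hN0)) hk0u
              hterm0nn (by positivity)
          linarith
      _ ≤ 20 * N ^ 6 * (K0 + K1 + K2) + N := by
          have h56 : N ^ 5 ≤ N ^ 6 := hNpow 5 6 (by norm_num)
          have h46 : N ^ 4 ≤ N ^ 6 := hNpow 4 6 (by norm_num)
          have h36 : N ^ 3 ≤ N ^ 6 := hNpow 3 6 (by norm_num)
          nlinarith [hK0, hK1, hK2, hN0,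
            mul_le_mul_of_nonneg_right h56 (le_of_lt hK2),
            mul_le_mul_of_nonneg_right h46 (le_of_lt hK1),
            mul_le_mul_of_nonneg_right h36 (le_of_lt hK0),
            mul_le_mul_of_nonneg_right h46 (le_of_lt hK0),
            mul_le_mul_of_nonneg_right h46 (le_of_lt hK2)]
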